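/- Let (Aₙ) ⊆ SL(2,ℂ) be a sequence with entries aₙ, bₙ, cₙ, dₙ such that the associated matrices ι(Aₙ) = [[aₙ², aₙbₙ, bₙ²],[2aₙcₙ, aₙdₙ+bₙcₙ, 2bₙdₙ],[cₙ², cₙdₙ, dₙ²]], after suitable nonzero scalar rescaling, converge to the identity matrix. Then, after suitable choice of signs εₙ ∈ {±1}, the matrices εₙAₙ converge to the identity in SL(2,ℂ). -/

import Mathlib

open Matrix Filter

noncomputable def iota (A : Matrix (Fin 2) (Fin 2) ℂ) : Matrix (Fin 3) (Fin 3) ℂ :=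
  !![A 0 0 ^ 2, A 0 0 * A 0 1, A 0 1 ^ 2;
     2 * A 0 0 * A 1 0, A 0 0 * A 1 1 + A 0 1 * A 1 0, 2 * A 0 1 * A 1 1;
     A 1 0 ^ 2, A 1 0 * A 1 1, A 1 1 ^ 2]

lemma sq_tendsto_zero {f : ℕ → ℂ} (h : Tendsto (fun n => f n ^ 2) atTop (nhds 0)) :
    Tendsto f atTop (nhds 0) := by
  rw [tendsto_zero_iff_norm_tendsto_zero] at h ⊢
  have h2 : Tendsto (fun n => Real.sqrt ‖f n ^ 2‖) atTop (nhds 0) := by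
    have := (Real.continuous_sqrt.tendsto' 0 0 Real.sqrt_zero).comp h
    exact this
  refine h2.congr (fun n => ?_)
  rw [norm_pow, Real.sqrt_sq (norm_nonneg _)]

theorem iota_proper (A : ℕ → Matrix (Fin 2) (Fin 2) ℂ) (hdet : ∀ n, (A n).det = 1)
    (c : ℕ → ℂ) (hc : ∀ n, c n ≠ 0)
    (hconv : Tendsto (fun n => c n • iota (A n)) atTop
      (nhds (1 : Matrix (Fin 3) (Fin 3) ℂ))) :
    ∃ ε : ℕ → ℂ, (∀ n, ε n = 1 ∨ ε n = -1) ∧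
      Tendsto (fun n => ε n • A n) atTop (nhds (1 : Matrix (Fin 2) (Fin 2) ℂ)) := by
  have hent : ∀ i j : Fin 3, Tendsto (fun n => c n * iota (A n) i j) atTop
      (nhds ((1 : Matrix (Fin 3) (Fin 3) ℂ) i j)) := by
    intro i j
    have := (tendsto_pi_nhds.1 ((tendsto_pi_nhds.1 hconv) i) j)
    simpa [Matrix.smul_apply, smul_eq_mul] using this
  have h00 : Tendsto (fun n => c n * (A n 0 0 ^ 2)) atTop (nhds 1) := by
    simpa [iota, Matrix.one_apply] using hent 0 0
  have h02 : Tendsto (fun n => c n * (A n 0 1 ^ 2)) atTop (nhds 0) := by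
    simpa [iota, Matrix.one_apply] using hent 0 2
  have h11 : Tendsto (fun n => c n * (A n 0 0 * A n 1 1 + A n 0 1 * A n 1 0)) atTop (nhds 1) := by
    simpa [iota, Matrix.one_apply] using hent 1 1
  have h20 : Tendsto (fun n => c n * (A n 1 0 ^ 2)) atTop (nhds 0) := by
    simpa [iota, Matrix.one_apply] using hent 2 0
  have h22 : Tendsto (fun n => c n * (A n 1 1 ^ 2)) atTop (nhds 1) := by
    simpa [iota, Matrix.one_apply] using hent 2 2
  have hdet' : ∀ n, A n 0 0 * A n 1 1 - A n 0 1 * A n 1 0 = 1 := by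
    intro n; rw [← Matrix.det_fin_two]; exact hdet n
  -- c n * (b c') → 0
  have hbc : Tendsto (fun n => c n * (A n 0 1 * A n 1 0)) atTop (nhds 0) := by
    apply sq_tendsto_zero
    have := h02.mul h20
    simpa [mul_pow] using this.congr (fun n => by ring)
  -- c n * (a d) → 1
  have had : Tendsto (fun n => c n * (A n 0 0 * A n 1 1)) atTop (nhds 1) := by
    have := h11.sub hbc
    simpa using this.congr (fun n => by ring)
  -- c → 1
  have hc1 : Tendsto c atTop (nhds 1) := by
    have := had.sub hbc
    simp only [sub_zero] at this
    refine this.congr (fun n => ?_)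
    have := hdet' n
    linear_combination c n * hdet' n
  -- entrywise limits without c
  have hdiv : ∀ (f : ℕ → ℂ) (L : ℂ), Tendsto (fun n => c n * f n) atTop (nhds L) →
      Tendsto f atTop (nhds L) := by
    intro f L h
    have := h.div hc1 one_ne_zero
    simp only [div_one] at this
    refine this.congr (fun n => ?_)
    simp only [Pi.div_apply]; field_simp [hc n]
  have ha2 : Tendsto (fun n => A n 0 0 ^ 2) atTop (nhds 1) := hdiv _ _ h00
  have hb : Tendsto (fun n => A n 0 1) atTop (nhds 0) := sq_tendsto_zero (hdiv _ _ h02)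
  have hcc : Tendsto (fun n => A n 1 0) atTop (nhds 0) := sq_tendsto_zero (hdiv _ _ h20)
  have had1 : Tendsto (fun n => A n 0 0 * A n 1 1) atTop (nhds 1) := hdiv _ _ had
  set ε : ℕ → ℂ := fun n => if ‖A n 0 0 - 1‖ ≤ ‖A n 0 0 + 1‖ then 1 else -1 with hεdef
  have hεpm : ∀ n, ε n = 1 ∨ ε n = -1 := by
    intro n; simp only [hεdef]; split <;> simp
  have hεnorm : ∀ n, ‖ε n‖ = 1 := by
    intro n; rcases hεpm n with h | h <;> rw [h] <;> simp
  have key : ∀ n, ‖ε n * A n 0 0 - 1‖ ^ 2 ≤ ‖A n 0 0 ^ 2 - 1‖ := by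
    intro n
    have hfac : ‖A n 0 0 ^ 2 - 1‖ = ‖A n 0 0 - 1‖ * ‖A n 0 0 + 1‖ := by
      rw [← norm_mul]; congr 1; ring
    by_cases h : ‖A n 0 0 - 1‖ ≤ ‖A n 0 0 + 1‖
    · have : ε n = 1 := by simp only [hεdef]; rw [if_pos h]
      rw [this, one_mul, hfac, sq]
      exact mul_le_mul_of_nonneg_left h (norm_nonneg _)
    · have hε : ε n = -1 := by simp only [hεdef]; rw [if_neg h]
      have : ‖ε n * A n 0 0 - 1‖ = ‖A n 0 0 + 1‖ := by
        rw [hε]; rw [show (-1 : ℂ) * A n 0 0 - 1 = -(A n 0 0 + 1) by ring, norm_neg]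
      rw [this, hfac, sq]
      exact mul_le_mul_of_nonneg_right (le_of_not_ge h) (norm_nonneg _)
  have hεa : Tendsto (fun n => ε n * A n 0 0) atTop (nhds 1) := by
    rw [tendsto_iff_norm_sub_tendsto_zero]
    have hnorm2 : Tendsto (fun n => ‖A n 0 0 ^ 2 - 1‖) atTop (nhds 0) := by
      rw [← tendsto_zero_iff_norm_tendsto_zero]
      simpa using ha2.sub (tendsto_const_nhds (x := (1 : ℂ)))
    have hsq : Tendsto (fun n => Real.sqrt ‖A n 0 0 ^ 2 - 1‖) atTop (nhds 0) := by
      have := (Real.continuous_sqrt.tendsto' 0 0 Real.sqrt_zero).comp hnorm2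
      exact this
    refine squeeze_zero (fun n => norm_nonneg _) (fun n => ?_) hsq
    rw [show ‖ε n * A n 0 0 - 1‖ = Real.sqrt (‖ε n * A n 0 0 - 1‖ ^ 2) by
      rw [Real.sqrt_sq (norm_nonneg _)]]
    exact Real.sqrt_le_sqrt (key n)
  have ha_ne : ∀ᶠ n in atTop, A n 0 0 ≠ 0 := by
    filter_upwards [hεa.eventually_ne one_ne_zero] with n hn
    intro h; exact hn (by rw [h, mul_zero])
  have hεd : Tendsto (fun n => ε n * A n 1 1) atTop (nhds 1) := by
    have hq : Tendsto (fun n => (A n 0 0 * A n 1 1) / (ε n * A n 0 0)) atTop (nhds 1) := by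
      simpa [Pi.div_def] using had1.div hεa one_ne_zero
    refine hq.congr' ?_
    filter_upwards [ha_ne] with n hn
    rcases hεpm n with h | h
    · rw [h, one_mul, one_mul, mul_comm, mul_div_assoc, div_self hn, mul_one]
    · rw [h, neg_one_mul, neg_one_mul, div_neg, mul_comm, mul_div_assoc, div_self hn, mul_one]
  have hεb : Tendsto (fun n => ε n * A n 0 1) atTop (nhds 0) := by
    rw [tendsto_zero_iff_norm_tendsto_zero]
    have := tendsto_zero_iff_norm_tendsto_zero.1 hb
    refine this.congr (fun n => ?_)
    rw [norm_mul, hεnorm, one_mul]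
  have hεc : Tendsto (fun n => ε n * A n 1 0) atTop (nhds 0) := by
    rw [tendsto_zero_iff_norm_tendsto_zero]
    have := tendsto_zero_iff_norm_tendsto_zero.1 hcc
    refine this.congr (fun n => ?_)
    rw [norm_mul, hεnorm, one_mul]
  refine ⟨ε, hεpm, ?_⟩
  refine tendsto_pi_nhds.2 (fun i => ?_)
  rw [tendsto_pi_nhds]; intro j
  fin_cases i <;> fin_cases j
  · simpa [Matrix.smul_apply, smul_eq_mul, Matrix.one_apply] using hεa
  · simpa [Matrix.smul_apply, smul_eq_mul, Matrix.one_apply] using hεb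
  · simpa [Matrix.smul_apply, smul_eq_mul, Matrix.one_apply] using hεc
  · simpa [Matrix.smul_apply, smul_eq_mul, Matrix.one_apply] using hεd
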